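/- Let λ be a Young diagram inside the k×(n−k) rectangle and let r_{ij}, (i,j) ∈ λ, be any positive integers satisfying r_{ij} > r_{i,j+1} and r_{ij} > r_{i+1,j} (with r_{ij} = 0 for (i,j) ∉ λ). Then X_λ·𝟏 ∈ 𝓛_λ. -/

import Mathlib

open scoped Classical

set_option maxHeartbeats 1000000
set_option synthInstance.maxHeartbeats 1000000

noncomputable section

/-- The field ℚ(v) of rational functions. -/
abbrev F : Type := RatFunc ℚ

/-- The variable v. -/
def v : F := RatFunc.X

/-- The quantum integer [r] = (v^r - v^{-r})/(v - v^{-1}). -/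
def qint (r : ℕ) : F := (v ^ r - v⁻¹ ^ r) / (v - v⁻¹)

/-- Sequences of n signs (`true` = `+`) with exactly k pluses. -/
abbrev Stt (n k : ℕ) := {ε : Fin n → Bool // (Finset.univ.filter fun t => ε t = true).card = k}

/-- The adjacent transposition s_m ∈ S_n (1-based: swaps positions m and m+1). -/
def sperm (n m : ℕ) : Equiv.Perm (Fin n) :=
  if h : 1 ≤ m ∧ m < n then Equiv.swap ⟨m - 1, by omega⟩ ⟨m, h.2⟩ else 1

/-- Action of w ∈ S_n on sequences: (w·ε)_{w(t)} = ε_t. -/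
def actE {n : ℕ} (w : Equiv.Perm (Fin n)) (ε : Fin n → Bool) : Fin n → Bool :=
  fun u => ε (w⁻¹ u)

lemma card_actE {n k : ℕ} (w : Equiv.Perm (Fin n)) (ε : Fin n → Bool)
    (h : (Finset.univ.filter fun t => ε t = true).card = k) :
    (Finset.univ.filter fun t => actE w ε t = true).card = k := by
  rw [← h]
  apply Finset.card_bij (fun t _ => w⁻¹ t)
  · intro a ha
    simp only [Finset.mem_filter, Finset.mem_univ, true_and, actE] at ha ⊢
    exact (Finset.mem_filter.1 ha).2
  · intro a _ b _ hab
    exact (Equiv.injective _) hab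
  · intro b hb
    simp only [Finset.mem_filter, Finset.mem_univ, true_and, actE] at hb ⊢
    exact ⟨w b, Finset.mem_filter.2 ⟨Finset.mem_univ _, by simpa [actE] using hb⟩, by simp⟩

/-- Action of S_n on the set E of sequences with k pluses. -/
def actS {n k : ℕ} (w : Equiv.Perm (Fin n)) (ε : Stt n k) : Stt n k :=
  ⟨actE w ε.1, card_actE w ε.1 ε.2⟩

/-- The module M, free over ℚ(v) with basis E. -/
abbrev M (n k : ℕ) := Stt n k → F

/-- The basis vector of M corresponding to ε ∈ E. -/
def bv {n k : ℕ} (ε : Stt n k) : M n k := Pi.single ε 1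

/-- The sequence 𝟏 = (+,…,+,−,…,−) (k pluses then n−k minuses). -/
def oneSeq (n k : ℕ) : Fin n → Bool := fun t => decide ((t : ℕ) < k)

lemma card_oneSeq (n k : ℕ) (h : k ≤ n) :
    (Finset.univ.filter fun t => oneSeq n k t = true).card = k := by
  have : (Finset.univ.filter fun t => oneSeq n k t = true)
      = Finset.univ.map (Fin.castLEEmb h) := by
    ext t
    simp only [Finset.mem_filter, Finset.mem_univ, true_and, oneSeq, decide_eq_true_eq,
      Finset.mem_map]
    constructor
    · intro ht; exact ⟨⟨t, ht⟩, rfl⟩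
    · rintro ⟨s, rfl⟩; exact s.2
  rw [this, Finset.card_map, Finset.card_univ, Fintype.card_fin]

/-- 𝟏 as an element of E. -/
def oneS (n k : ℕ) (h : k ≤ n) : Stt n k := ⟨oneSeq n k, card_oneSeq n k h⟩

/-- The operator T_m on M (1 ≤ m ≤ n−1), defined on basis elements. -/
def Thk (n k : ℕ) (m : ℕ) : M n k →ₗ[F] M n k :=
  (Pi.basisFun F (Stt n k)).constr ℕ fun ε =>
    if h : 1 ≤ m ∧ m < n then
      let a := ε.1 ⟨m - 1, by omega⟩
      let b := ε.1 ⟨m, h.2⟩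
      if a = true ∧ b = false then bv (actS (sperm n m) ε)
      else if a = b then (-v⁻¹) • bv ε
      else bv (actS (sperm n m) ε) + (v - v⁻¹) • bv ε
    else 0

/-- A Young diagram inside the k×(n−k) rectangle, given by its row lengths
(1-based: row i has lam i boxes). -/
def IsYoung (n k : ℕ) (lam : ℕ → ℕ) : Prop :=
  (∀ i, 1 ≤ i → lam (i + 1) ≤ lam i) ∧ lam 1 ≤ n - k ∧ (∀ i, k < i → lam i = 0)

/-- The boxes of λ, listed row by row from the bottom row to the top row,
each row from its last box to its first (so box (1,1) comes last). -/
def boxList (k : ℕ) (lam : ℕ → ℕ) : List (ℕ × ℕ) :=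
  ((List.range k).reverse.map fun i' =>
    (List.range (lam (i' + 1))).reverse.map fun j' => (i' + 1, j' + 1)).flatten

/-- The word of w_λ: letter k+j−i for box (i,j). -/
def wword (k : ℕ) (lam : ℕ → ℕ) : List ℕ := (boxList k lam).map fun b => k + b.2 - b.1

/-- The permutation w_λ = ∏_{(i,j)∈λ} s_{k+j−i} (box (1,1) rightmost). -/
def wperm (n k : ℕ) (lam : ℕ → ℕ) : Equiv.Perm (Fin n) := ((wword k lam).map (sperm n)).prod

/-- w_λ·𝟏 as an element of E. -/
def wSt (n k : ℕ) (h : k ≤ n) (lam : ℕ → ℕ) : Stt n k := actS (wperm n k lam) (oneS n k h)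

/-- r is the system of shifts of λ: r_{ij} = max(r_{i,j+1}, r_{i+1,j}) + 1 on boxes of λ,
and r_{ij} = 0 off λ. -/
def IsShifts (lam : ℕ → ℕ) (r : ℕ → ℕ → ℕ) : Prop :=
  ∀ i j, r i j = if 1 ≤ i ∧ 1 ≤ j ∧ j ≤ lam i then max (r i (j + 1)) (r (i + 1) j) + 1 else 0

/-- The operator X_λ = ∏_{(i,j)∈λ} (T_{k+j−i} − v^{r_{ij}}/[r_{ij}]), the factor of
box (1,1) applied first. -/
def Xop (n k : ℕ) (lam : ℕ → ℕ) (r : ℕ → ℕ → ℕ) : Module.End F (M n k) :=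
  ((boxList k lam).map fun b =>
    (Thk n k (k + b.2 - b.1) - (v ^ r b.1 b.2 / qint (r b.1 b.2)) • (1 : Module.End F (M n k)) : Module.End F (M n k))).prod

/-- O(v^m): rational functions with a zero of order ≥ m at v = 0. -/
def Ozero (m : ℕ) : Set F :=
  {f | ∃ p q : Polynomial ℚ, Polynomial.eval 0 q ≠ 0 ∧
        f = v ^ m * (algebraMap (Polynomial ℚ) F p / algebraMap (Polynomial ℚ) F q)}

/-- Value of a sequence at the 1-based position t. -/
def posVal {n : ℕ} (ε : Fin n → Bool) (t : ℕ) : Bool :=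
  if h : 1 ≤ t ∧ t ≤ n then ε ⟨t - 1, by omega⟩ else false

/-- a(i) = k + λ_i − i + 1 for 1 ≤ i ≤ k, and a(i) = 0 for i > k. -/
def aF (k : ℕ) (lam : ℕ → ℕ) (i : ℕ) : ℕ := if i ≤ k then k + lam i + 1 - i else 0

/-- The contribution r_t(ε) to the weight. -/
def weightT (k : ℕ) (lam : ℕ → ℕ) (r : ℕ → ℕ → ℕ) {n : ℕ} (ε : Fin n → Bool) (t : ℕ) : ℕ :=
  ∑ i ∈ Finset.Icc 1 k,
    ((if posVal ε t = false ∧ 1 ≤ lam i ∧ t = aF k lam i then r i (lam i) - 1 else 0) +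
     (if posVal ε t = true ∧ aF k lam (i + 1) < t ∧ t < aF k lam i then r i (t + i - k) else 0))

/-- The weight r_λ(ε) = Σ_{t=1}^n r_t(ε). -/
def weight (n k : ℕ) (lam : ℕ → ℕ) (r : ℕ → ℕ → ℕ) (ε : Fin n → Bool) : ℕ :=
  ∑ t ∈ Finset.Icc 1 n, weightT k lam r ε t

/-- 𝓛_λ = Σ_ε O(v^{r_λ(ε)}) ε. -/
def Lset (n k : ℕ) (lam : ℕ → ℕ) (r : ℕ → ℕ → ℕ) : Set (M n k) :=
  {m | ∀ ε : Stt n k, m ε ∈ Ozero (weight n k lam r ε.1)}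

/-- The length (number of inversions) of a permutation. -/
def len {n : ℕ} (w : Equiv.Perm (Fin n)) : ℕ :=
  (Finset.univ.filter fun p : Fin n × Fin n => p.1 < p.2 ∧ w p.2 < w p.1).card

/-- The parabolic subgroup W_J = S_k × S_{n−k}: permutations mapping {1,…,k} to itself. -/
def WJ (n k : ℕ) : Set (Equiv.Perm (Fin n)) :=
  {σ | ∀ t : Fin n, (t : ℕ) < k → ((σ t : ℕ) < k)}

/-- W^J: permutations of minimal length in their coset w·W_J. -/
def Wmin (n k : ℕ) : Set (Equiv.Perm (Fin n)) :=
  {w | ∀ σ ∈ WJ n k, len w ≤ len (w * σ)}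

/-- The variable x_p (1-based position p) in ℚ(v)[x_1,…,x_n]. -/
def xv (n p : ℕ) : MvPolynomial (Fin n) F :=
  if h : 1 ≤ p ∧ p ≤ n then MvPolynomial.X ⟨p - 1, by omega⟩ else 0

/-- Exchange of the variables x_i and x_{i+1} (1-based, 1 ≤ i ≤ n−1). -/
def swapf (n i : ℕ) (f : MvPolynomial (Fin n) F) : MvPolynomial (Fin n) F :=
  if h : 1 ≤ i ∧ i < n then
    MvPolynomial.rename (Equiv.swap ⟨i - 1, by omega⟩ ⟨i, h.2⟩) f
  else f

/-- The divided difference ∂_i f = (f − s_i f)/(x_i − x_{i+1}). -/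
def ddiff (n i : ℕ) (f : MvPolynomial (Fin n) F) : MvPolynomial (Fin n) F :=
  if h : ∃ g, f - swapf n i f = (xv n i - xv n (i + 1)) * g then h.choose else 0

/-- The operator ∇_i f = (v x_{i+1} − v⁻¹ x_i)·∂_i f. -/
def nabla (n i : ℕ) (f : MvPolynomial (Fin n) F) : MvPolynomial (Fin n) F :=
  (MvPolynomial.C v * xv n (i + 1) - MvPolynomial.C v⁻¹ * xv n i) * ddiff n i f

/-- Parenthesis matching: minuses (`false`) are openers, pluses (`true`) are closers;
each plus is matched with the most recent unmatched minus, i.e. each minus with the first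
subsequent unmatched plus.  Returns the list of matched pairs (p,q) of 1-based positions
and the list of unmatched minus positions. -/
def matchAux : List Bool → ℕ → List ℕ → List (ℕ × ℕ) × List ℕ
  | [], _, stack => ([], stack)
  | b :: rest, pos, stack =>
    if b then
      match stack with
      | [] => matchAux rest (pos + 1) []
      | p :: stack' =>
        let res := matchAux rest (pos + 1) stack'
        ((p, pos) :: res.1, res.2)
    else matchAux rest (pos + 1) (pos :: stack)

/-- d(ε) = #{(p,q) : p < q, ε_p = −, ε_q = +}. -/
def dstat {n : ℕ} (ε : Fin n → Bool) : ℕ :=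
  (Finset.univ.filter fun pq : Fin n × Fin n =>
    pq.1 < pq.2 ∧ ε pq.1 = false ∧ ε pq.2 = true).card

/-- The polynomial Q_ε. -/
def Qpoly (n : ℕ) (ε : Fin n → Bool) : MvPolynomial (Fin n) F :=
  MvPolynomial.C (v⁻¹ ^ dstat ε) *
    ((matchAux (List.ofFn ε) 1 []).1.map fun pq =>
        xv n pq.1 - MvPolynomial.C (v ^ (pq.2 + 1 - pq.1)) * xv n pq.2).prod *
    ((matchAux (List.ofFn ε) 1 []).2.map fun p => xv n p).prod

/-- The operator T_m on M′ (the parabolic module induced from T_j ↦ v). -/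
def Thk' (n k : ℕ) (m : ℕ) : M n k →ₗ[F] M n k :=
  (Pi.basisFun F (Stt n k)).constr ℕ fun ε =>
    if h : 1 ≤ m ∧ m < n then
      let a := ε.1 ⟨m - 1, by omega⟩
      let b := ε.1 ⟨m, h.2⟩
      if a = true ∧ b = false then bv (actS (sperm n m) ε)
      else if a = b then v • bv ε
      else bv (actS (sperm n m) ε) + (v - v⁻¹) • bv ε
    else 0

/-- The map Φ : M′ → ℚ(v)[x_1,…,x_n], ε ↦ v^{−d(ε)} ∏_{t : ε_t = −} x_t. -/
def Phi (n k : ℕ) : M n k →ₗ[F] MvPolynomial (Fin n) F :=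
  (Pi.basisFun F (Stt n k)).constr ℕ fun ε =>
    MvPolynomial.C (v⁻¹ ^ dstat ε.1) *
      ∏ t ∈ Finset.univ.filter (fun t => ε.1 t = false), MvPolynomial.X t

/-- The space P(k,n): polynomials homogeneous of total degree n−k, of degree ≤ 1 in each
variable. -/
def Pspace (n k : ℕ) : Set (MvPolynomial (Fin n) F) :=
  {f | f.IsHomogeneous (n - k) ∧ ∀ t : Fin n, f.degreeOf t ≤ 1}


-- PART 1 : Ozero lemmas
lemma vF_ne : (v : F) ≠ 0 := RatFunc.X_ne_zero

lemma algF_inj : Function.Injective (algebraMap (Polynomial ℚ) F) := RatFunc.algebraMap_injective ℚ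

lemma v_pow_ne_one {N : ℕ} (hN : 1 ≤ N) : (v : F) ^ N ≠ 1 := by
  intro h
  have h2 : algebraMap (Polynomial ℚ) F (Polynomial.X ^ N) = algebraMap (Polynomial ℚ) F 1 := by
    rw [map_pow, RatFunc.algebraMap_X, map_one]; exact h
  have h3 := algF_inj h2
  have h4 := congrArg (Polynomial.eval 0) h3
  rw [Polynomial.eval_pow, Polynomial.eval_X, Polynomial.eval_one, zero_pow (by omega : N ≠ 0)] at h4
  exact zero_ne_one h4

lemma Ozero_zero (m : ℕ) : (0 : F) ∈ Ozero m :=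
  ⟨0, 1, by simp, by simp⟩

lemma Ozero_one : (1 : F) ∈ Ozero 0 :=
  ⟨1, 1, by simp, by simp⟩

lemma algF_ne_zero {q : Polynomial ℚ} (hq : Polynomial.eval 0 q ≠ 0) :
    algebraMap (Polynomial ℚ) F q ≠ 0 := by
  apply RatFunc.algebraMap_ne_zero
  intro h; rw [h] at hq; simp at hq

lemma Ozero_add {m : ℕ} {f g : F} (hf : f ∈ Ozero m) (hg : g ∈ Ozero m) : f + g ∈ Ozero m := by
  obtain ⟨p1, q1, hq1, rfl⟩ := hf
  obtain ⟨p2, q2, hq2, rfl⟩ := hg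
  refine ⟨p1 * q2 + p2 * q1, q1 * q2, by simp [hq1, hq2], ?_⟩
  rw [← mul_add, div_add_div _ _ (algF_ne_zero hq1) (algF_ne_zero hq2)]
  push_cast [map_add, map_mul]
  ring

lemma Ozero_neg {m : ℕ} {f : F} (hf : f ∈ Ozero m) : -f ∈ Ozero m := by
  obtain ⟨p, q, hq, rfl⟩ := hf
  exact ⟨-p, q, hq, by rw [map_neg]; ring⟩

lemma Ozero_mul {m₁ m₂ : ℕ} {f g : F} (hf : f ∈ Ozero m₁) (hg : g ∈ Ozero m₂) :
    f * g ∈ Ozero (m₁ + m₂) := by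
  obtain ⟨p1, q1, hq1, rfl⟩ := hf
  obtain ⟨p2, q2, hq2, rfl⟩ := hg
  refine ⟨p1 * p2, q1 * q2, by simp [hq1, hq2], ?_⟩
  rw [map_mul, map_mul, pow_add]
  field_simp

lemma Ozero_mono {m m' : ℕ} (h : m' ≤ m) {f : F} (hf : f ∈ Ozero m) : f ∈ Ozero m' := by
  obtain ⟨p, q, hq, rfl⟩ := hf
  refine ⟨Polynomial.X ^ (m - m') * p, q, hq, ?_⟩
  rw [map_mul, map_pow, RatFunc.algebraMap_X]
  rw [show m = m' + (m - m') by omega, pow_add]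
  unfold v
  field_simp
  rw [Nat.add_sub_cancel_left]
  ring

lemma Ozero_v_mem : (v : F) ∈ Ozero 1 := ⟨1, 1, by simp, by simp⟩

lemma Ozero_vinv_mul {m : ℕ} {f : F} (hf : f ∈ Ozero (m + 1)) : v⁻¹ * f ∈ Ozero m := by
  obtain ⟨p, q, hq, rfl⟩ := hf
  refine ⟨p, q, hq, ?_⟩
  calc v⁻¹ * (v ^ (m+1) * (algebraMap (Polynomial ℚ) F p / algebraMap (Polynomial ℚ) F q))
      = (v⁻¹ * v) * (v ^ m * (algebraMap (Polynomial ℚ) F p / algebraMap (Polynomial ℚ) F q)) := by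
        rw [pow_succ]; ring
    _ = v ^ m * (algebraMap (Polynomial ℚ) F p / algebraMap (Polynomial ℚ) F q) := by
        rw [inv_mul_cancel₀ vF_ne, one_mul]

lemma Ozero_neg_vinv_mul {m : ℕ} {f : F} (hf : f ∈ Ozero (m + 1)) : -v⁻¹ * f ∈ Ozero m := by
  have := Ozero_neg (Ozero_vinv_mul hf)
  convert this using 1; ring

lemma Ozero_vsub_mul {m : ℕ} {f : F} (hf : f ∈ Ozero (m + 1)) : (v - v⁻¹) * f ∈ Ozero m := by
  have h1 : v * f ∈ Ozero m := Ozero_mono (by omega) (Ozero_mul Ozero_v_mem hf)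
  have h2 : -v⁻¹ * f ∈ Ozero m := Ozero_neg_vinv_mul hf
  have := Ozero_add h1 h2
  convert this using 1; ring

lemma vFsub_ne : (v : F) - v⁻¹ ≠ 0 := by
  intro h
  have hv2 : (v:F)^2 = 1 := by
    have h1 : (v:F) = v⁻¹ := sub_eq_zero.mp h
    calc (v:F)^2 = v * v := sq v
      _ = v⁻¹ * v := by rw [← h1]
      _ = 1 := inv_mul_cancel₀ vF_ne
  exact v_pow_ne_one (by norm_num) hv2

lemma vpow_sub_ne_zero {ρ : ℕ} (hρ : 1 ≤ ρ) : (v : F) ^ ρ - v⁻¹ ^ ρ ≠ 0 := by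
  intro h
  have := sub_eq_zero.mp h
  have h2 : (v:F) ^ (2*ρ) = 1 := by
    rw [two_mul, pow_add]
    nth_rewrite 1 [this]
    rw [inv_pow, inv_mul_cancel₀ (pow_ne_zero _ vF_ne)]
  exact v_pow_ne_one (by omega) h2

lemma qint_ne_zero {ρ : ℕ} (hρ : 1 ≤ ρ) : qint ρ ≠ 0 := by
  unfold qint
  exact div_ne_zero (vpow_sub_ne_zero hρ) vFsub_ne

lemma Ozero_c_mem {ρ : ℕ} (hρ : 1 ≤ ρ) : v ^ ρ / qint ρ ∈ Ozero (2 * ρ - 1) := by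
  obtain ⟨s, rfl⟩ : ∃ s, ρ = s + 1 := ⟨ρ - 1, by omega⟩
  refine ⟨Polynomial.X ^ 2 - 1, Polynomial.X ^ (2 * (s+1)) - 1, by simp, ?_⟩
  rw [show 2 * (s + 1) - 1 = 2*s + 1 by omega]
  rw [map_sub, map_sub, map_pow, map_pow, RatFunc.algebraMap_X, map_one]
  have hd1 : (v : F) ^ (s+1) - v⁻¹ ^ (s+1) ≠ 0 := vpow_sub_ne_zero (by omega)
  have hd2 : (RatFunc.X : F) ^ (2 * (s+1)) - 1 ≠ 0 := by
    intro h; exact v_pow_ne_one (N := 2*(s+1)) (by omega) (by rw [← sub_eq_zero]; exact h)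
  unfold qint
  rw [div_div_eq_mul_div, mul_div_assoc']
  rw [div_eq_div_iff hd1 hd2]
  unfold v
  have hX : (RatFunc.X : F) ≠ 0 := RatFunc.X_ne_zero
  rw [inv_pow]
  field_simp
  ring

-- PART 2 : action and Thk application lemmas
section ActLemmas
variable {n k : ℕ}

lemma sperm_eq {m : ℕ} (h1 : 1 ≤ m) (h2 : m < n) :
    sperm n m = Equiv.swap ⟨m - 1, by omega⟩ ⟨m, h2⟩ := by
  unfold sperm; rw [dif_pos ⟨h1, h2⟩]

lemma actE_sperm_apply {m : ℕ} (h1 : 1 ≤ m) (h2 : m < n) (ε : Fin n → Bool) (u : Fin n) :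
    actE (sperm n m) ε u = ε (Equiv.swap (⟨m - 1, by omega⟩ : Fin n) ⟨m, h2⟩ u) := by
  unfold actE
  rw [sperm_eq h1 h2, Equiv.swap_inv]

lemma posVal_eq {t : ℕ} (h1 : 1 ≤ t) (h2 : t ≤ n) (ε : Fin n → Bool) :
    posVal ε t = ε ⟨t - 1, by omega⟩ := by
  unfold posVal; rw [dif_pos ⟨h1, h2⟩]

lemma actE_sperm_a {m : ℕ} (h1 : 1 ≤ m) (h2 : m < n) (ε : Fin n → Bool) :
    actE (sperm n m) ε ⟨m - 1, by omega⟩ = ε ⟨m, h2⟩ := by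
  rw [actE_sperm_apply h1 h2, Equiv.swap_apply_left]

lemma actE_sperm_b {m : ℕ} (h1 : 1 ≤ m) (h2 : m < n) (ε : Fin n → Bool) :
    actE (sperm n m) ε ⟨m, h2⟩ = ε ⟨m - 1, by omega⟩ := by
  rw [actE_sperm_apply h1 h2, Equiv.swap_apply_right]

lemma actE_sperm_other {m : ℕ} (h1 : 1 ≤ m) (h2 : m < n) (ε : Fin n → Bool) (u : Fin n)
    (hu1 : (u : ℕ) ≠ m - 1) (hu2 : (u : ℕ) ≠ m) :
    actE (sperm n m) ε u = ε u := by
  rw [actE_sperm_apply h1 h2, Equiv.swap_apply_of_ne_of_ne]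
  · exact fun hh => hu1 (by rw [hh])
  · exact fun hh => hu2 (by rw [hh])

lemma actS_invol {m : ℕ} (h1 : 1 ≤ m) (h2 : m < n) (ε : Stt n k) :
    actS (sperm n m) (actS (sperm n m) ε) = ε := by
  apply Subtype.ext
  funext u
  show actE (sperm n m) (actE (sperm n m) ε.1) u = ε.1 u
  rw [actE_sperm_apply h1 h2, actE_sperm_apply h1 h2, Equiv.swap_apply_self]

lemma actS_eq_iff {m : ℕ} (h1 : 1 ≤ m) (h2 : m < n) (ε η : Stt n k) :
    η = actS (sperm n m) ε ↔ ε = actS (sperm n m) η := by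
  constructor
  · intro h; rw [h, actS_invol h1 h2]
  · intro h; rw [h, actS_invol h1 h2]

lemma actS_fst {m : ℕ} (ε : Stt n k) : (actS (sperm n m) ε).1 = actE (sperm n m) ε.1 := rfl

lemma actS_eq_self {m : ℕ} (h1 : 1 ≤ m) (h2 : m < n) (ε : Stt n k)
    (he : ε.1 ⟨m - 1, by omega⟩ = ε.1 ⟨m, h2⟩) : actS (sperm n m) ε = ε := by
  apply Subtype.ext
  funext u
  show actE (sperm n m) ε.1 u = ε.1 u
  by_cases hu1 : (u : ℕ) = m - 1
  · have : u = ⟨m - 1, by omega⟩ := by apply Fin.ext; exact hu1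
    rw [this, actE_sperm_a h1 h2, he]
  · by_cases hu2 : (u : ℕ) = m
    · have : u = ⟨m, h2⟩ := by apply Fin.ext; exact hu2
      rw [this, actE_sperm_b h1 h2, he]
    · exact actE_sperm_other h1 h2 ε.1 u hu1 hu2

lemma bv_apply (η ε' : Stt n k) : bv η ε' = if ε' = η then 1 else 0 := by
  unfold bv
  by_cases h : ε' = η
  · rw [if_pos h, h, Pi.single_eq_same]
  · rw [if_neg h, Pi.single_eq_of_ne h]

lemma Thk_apply {m : ℕ} (hm : 1 ≤ m) (hmn : m < n) (x : M n k) (ε' : Stt n k) :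
    Thk n k m x ε' =
      if posVal ε'.1 m = true ∧ posVal ε'.1 (m+1) = false then x (actS (sperm n m) ε')
      else if posVal ε'.1 m = posVal ε'.1 (m+1) then (-v⁻¹) * x ε'
      else x (actS (sperm n m) ε') + (v - v⁻¹) * x ε' := by
  have h : 1 ≤ m ∧ m < n := ⟨hm, hmn⟩
  have hpv1 : posVal ε'.1 m = ε'.1 ⟨m - 1, by omega⟩ := posVal_eq hm (by omega) _
  have hpv2 : posVal ε'.1 (m+1) = ε'.1 ⟨m, hmn⟩ := by
    rw [posVal_eq (by omega) (by omega)]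
    congr 1
  have key : ∀ ε : Stt n k,
      ((if h : 1 ≤ m ∧ m < n then
        (if ε.1 ⟨m-1, by omega⟩ = true ∧ ε.1 ⟨m, h.2⟩ = false then bv (actS (sperm n m) ε)
         else if ε.1 ⟨m-1, by omega⟩ = ε.1 ⟨m, h.2⟩ then (-v⁻¹) • bv ε
         else bv (actS (sperm n m) ε) + (v - v⁻¹) • bv ε)
        else 0) : M n k) ε' =
      (if ε.1 ⟨m-1, by omega⟩ = true ∧ ε.1 ⟨m, hmn⟩ = false then
          (if ε' = actS (sperm n m) ε then (1:F) else 0)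
       else if ε.1 ⟨m-1, by omega⟩ = ε.1 ⟨m, hmn⟩ then
          (if ε' = ε then -v⁻¹ else 0)
       else (if ε' = actS (sperm n m) ε then (1:F) else 0) + (if ε' = ε then v - v⁻¹ else 0)) := by
    intro ε
    rw [dif_pos h]
    by_cases h1 : ε.1 ⟨m-1, by omega⟩ = true ∧ ε.1 ⟨m, hmn⟩ = false
    · rw [if_pos h1, if_pos h1, bv_apply]
    · rw [if_neg h1, if_neg h1]
      by_cases h2 : ε.1 ⟨m-1, by omega⟩ = ε.1 ⟨m, hmn⟩
      · rw [if_pos h2, if_pos h2, Pi.smul_apply, bv_apply, smul_eq_mul]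
        by_cases h3 : ε' = ε
        · rw [if_pos h3, if_pos h3, mul_one]
        · rw [if_neg h3, if_neg h3, mul_zero]
      · rw [if_neg h2, if_neg h2, Pi.add_apply, Pi.smul_apply, bv_apply, bv_apply, smul_eq_mul]
        by_cases h3 : ε' = ε
        · rw [if_pos h3, if_pos h3, mul_one]
        · rw [if_neg h3, if_neg h3, mul_zero]
  have expand : Thk n k m x ε' = ∑ ε : Stt n k, x ε *
      (if ε.1 ⟨m-1, by omega⟩ = true ∧ ε.1 ⟨m, hmn⟩ = false then
          (if ε' = actS (sperm n m) ε then (1:F) else 0)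
       else if ε.1 ⟨m-1, by omega⟩ = ε.1 ⟨m, hmn⟩ then
          (if ε' = ε then -v⁻¹ else 0)
       else (if ε' = actS (sperm n m) ε then (1:F) else 0) + (if ε' = ε then v - v⁻¹ else 0)) := by
    rw [Thk, Module.Basis.constr_apply_fintype, Finset.sum_apply]
    apply Finset.sum_congr rfl
    intro ε _
    rw [Pi.smul_apply, smul_eq_mul, Pi.basisFun_equivFun, LinearEquiv.refl_apply]
    rw [key ε]
  rw [expand, hpv1, hpv2]
  have hself : ∀ ε : Stt n k, ε' = actS (sperm n m) ε →
      (ε'.1 ⟨m-1, by omega⟩ = ε.1 ⟨m, hmn⟩ ∧ ε'.1 ⟨m, hmn⟩ = ε.1 ⟨m-1, by omega⟩) := by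
    intro ε hc
    exact ⟨by rw [hc]; exact actE_sperm_a hm hmn ε.1, by rw [hc]; exact actE_sperm_b hm hmn ε.1⟩
  by_cases hP : ε'.1 ⟨m-1, by omega⟩ = true ∧ ε'.1 ⟨m, hmn⟩ = false
  · rw [if_pos hP]
    rw [Finset.sum_eq_single (actS (sperm n m) ε')]
    · have e1 : (actS (sperm n m) ε').1 ⟨m-1, by omega⟩ = false := by
        rw [actS_fst, actE_sperm_a hm hmn]; exact hP.2
      have e2 : (actS (sperm n m) ε').1 ⟨m, hmn⟩ = true := by
        rw [actS_fst, actE_sperm_b hm hmn]; exact hP.1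
      rw [if_neg (by rw [e1, e2]; simp), if_neg (by rw [e1, e2]; simp),
        if_pos (actS_invol hm hmn ε').symm,
        if_neg (fun hc => by
          have t1 := hP.1
          rw [hc, e1] at t1
          exact Bool.false_ne_true t1),
        add_zero, mul_one]
    · intro ε _ hne
      by_cases h1 : ε.1 ⟨m-1, by omega⟩ = true ∧ ε.1 ⟨m, hmn⟩ = false
      · rw [if_pos h1, if_neg (fun hc => hne ((actS_eq_iff hm hmn ε ε').mp hc)), mul_zero]
      · rw [if_neg h1]
        have hnd : ¬ (ε' = ε) := fun hc => by
          have t1 := hP.1; have t2 := hP.2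
          rw [hc] at t1 t2
          exact h1 ⟨t1, t2⟩
        by_cases h2 : ε.1 ⟨m-1, by omega⟩ = ε.1 ⟨m, hmn⟩
        · rw [if_pos h2, if_neg hnd, mul_zero]
        · rw [if_neg h2, if_neg (fun hc => hne ((actS_eq_iff hm hmn ε ε').mp hc)),
            if_neg hnd, add_zero, mul_zero]
    · intro hno; exact absurd (Finset.mem_univ _) hno
  · rw [if_neg hP]
    by_cases hQ : ε'.1 ⟨m-1, by omega⟩ = ε'.1 ⟨m, hmn⟩
    · rw [if_pos hQ]
      rw [Finset.sum_eq_single ε']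
      · rw [if_neg hP, if_pos hQ, if_pos rfl]; ring
      · intro ε _ hne
        have hnd : ¬ (ε' = ε) := fun hc => hne hc.symm
        by_cases h1 : ε.1 ⟨m-1, by omega⟩ = true ∧ ε.1 ⟨m, hmn⟩ = false
        · rw [if_pos h1, if_neg (fun hc => by
            obtain ⟨u1, u2⟩ := hself ε hc
            rw [h1.2] at u1
            rw [h1.1] at u2
            rw [u1, u2] at hQ
            exact Bool.false_ne_true hQ), mul_zero]
        · rw [if_neg h1]
          by_cases h2 : ε.1 ⟨m-1, by omega⟩ = ε.1 ⟨m, hmn⟩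
          · rw [if_pos h2, if_neg hnd, mul_zero]
          · rw [if_neg h2, if_neg (fun hc => by
              obtain ⟨u1, u2⟩ := hself ε hc
              apply h2
              rw [← u2, ← hQ, u1]), if_neg hnd, add_zero, mul_zero]
      · intro hno; exact absurd (Finset.mem_univ _) hno
    · rw [if_neg hQ]
      have ea : ε'.1 ⟨m-1, by omega⟩ = false := by
        cases hx1 : ε'.1 ⟨m-1, by omega⟩ <;> cases hx2 : ε'.1 ⟨m, hmn⟩
        · rfl
        · rfl
        · exact absurd ⟨hx1, hx2⟩ hP
        · rw [hx1, hx2] at hQ; exact absurd rfl hQ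
      have eb : ε'.1 ⟨m, hmn⟩ = true := by
        cases hx2 : ε'.1 ⟨m, hmn⟩
        · rw [ea, hx2] at hQ; exact absurd rfl hQ
        · rfl
      have hne0 : actS (sperm n m) ε' ≠ ε' := by
        intro hc
        have t := actE_sperm_a hm hmn ε'.1
        rw [show actE (sperm n m) ε'.1 = (actS (sperm n m) ε').1 from rfl, hc, ea, eb] at t
        exact Bool.false_ne_true t
      rw [Finset.sum_eq_add_of_mem (actS (sperm n m) ε') ε' (Finset.mem_univ _) (Finset.mem_univ _) hne0]
      · have e1 : (actS (sperm n m) ε').1 ⟨m-1, by omega⟩ = true := by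
          rw [actS_fst, actE_sperm_a hm hmn]; exact eb
        have e2 : (actS (sperm n m) ε').1 ⟨m, hmn⟩ = false := by
          rw [actS_fst, actE_sperm_b hm hmn]; exact ea
        rw [if_pos ⟨e1, e2⟩, if_pos (actS_invol hm hmn ε').symm,
          if_neg (by rw [ea]; simp), if_neg (by rw [ea, eb]; simp),
          if_neg (fun hc => hne0 hc.symm), if_pos rfl]
        ring
      · intro ε _ hcc
        obtain ⟨hne1, hne2⟩ := hcc
        have hnd : ¬ (ε' = ε) := fun hc => hne2 hc.symm
        have hns : ¬ (ε' = actS (sperm n m) ε) :=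
          fun hc => hne1 ((actS_eq_iff hm hmn ε ε').mp hc)
        by_cases h1 : ε.1 ⟨m-1, by omega⟩ = true ∧ ε.1 ⟨m, hmn⟩ = false
        · rw [if_pos h1, if_neg hns, mul_zero]
        · rw [if_neg h1]
          by_cases h2 : ε.1 ⟨m-1, by omega⟩ = ε.1 ⟨m, hmn⟩
          · rw [if_pos h2, if_neg hnd, mul_zero]
          · rw [if_neg h2, if_neg hns, if_neg hnd, add_zero, mul_zero]

end ActLemmas
-- PART 3 : shapes, aF, weightT evaluation
structure ShapeOK (n k : ℕ) (μ : ℕ → ℕ) : Prop where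
  dec : ∀ i, 1 ≤ i → μ (i + 1) ≤ μ i
  le : μ 1 ≤ n - k
  zero : ∀ i, k < i → μ i = 0

section WeightLemmas
variable {n k : ℕ}

lemma mu_mono {μ : ℕ → ℕ} (hS : ShapeOK n k μ) :
    ∀ i i', 1 ≤ i → i ≤ i' → μ i' ≤ μ i := by
  intro i i' h1 h2
  induction i' with
  | zero => omega
  | succ j ih =>
    rcases Nat.lt_or_ge i (j+1) with hlt | hge
    · have hj : i ≤ j := by omega
      exact le_trans (hS.dec j (by omega)) (ih hj)
    · have : i = j + 1 := by omega
      rw [this]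

lemma aF_eq {μ : ℕ → ℕ} {i : ℕ} (h : i ≤ k) : aF k μ i = k + μ i + 1 - i := by
  unfold aF; rw [if_pos h]

lemma aF_pos {μ : ℕ → ℕ} {i : ℕ} (h1 : 1 ≤ i) (h2 : i ≤ k) : 1 ≤ aF k μ i := by
  rw [aF_eq h2]; omega

lemma aF_lt_aF {μ : ℕ → ℕ} (hS : ShapeOK n k μ) {i i' : ℕ}
    (h1 : 1 ≤ i) (hii : i < i') (hik : i' ≤ k + 1) : aF k μ i' < aF k μ i := by
  have hik2 : i ≤ k := by omega
  rcases Nat.lt_or_ge i' (k+1) with hlt | hge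
  · have h' : i' ≤ k := by omega
    rw [aF_eq h', aF_eq hik2]
    have := mu_mono hS i i' h1 (by omega)
    omega
  · have : i' = k + 1 := by omega
    rw [this]
    have : aF k μ (k+1) = 0 := by unfold aF; rw [if_neg (by omega)]
    rw [this]
    exact aF_pos h1 hik2

lemma aF_le_aF {μ : ℕ → ℕ} (hS : ShapeOK n k μ) {i i' : ℕ}
    (h1 : 1 ≤ i) (hii : i ≤ i') (hik : i' ≤ k + 1) : aF k μ i' ≤ aF k μ i := by
  rcases Nat.lt_or_ge i i' with hlt | hge
  · exact le_of_lt (aF_lt_aF hS h1 hlt hik)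
  · have : i = i' := by omega
    rw [this]

lemma weightT_at_aF {μ : ℕ → ℕ} (r : ℕ → ℕ → ℕ) (hS : ShapeOK n k μ) {i0 t : ℕ}
    (h1 : 1 ≤ i0) (h2 : i0 ≤ k) (ht : t = aF k μ i0) (ε : Fin n → Bool) :
    weightT k μ r ε t = if posVal ε t = false ∧ 1 ≤ μ i0 then r i0 (μ i0) - 1 else 0 := by
  unfold weightT
  rw [Finset.sum_eq_single_of_mem i0 (by rw [Finset.mem_Icc]; omega)]
  · have hno : ¬(posVal ε t = true ∧ aF k μ (i0+1) < t ∧ t < aF k μ i0) := by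
      intro hc; rw [ht] at hc; exact lt_irrefl _ hc.2.2
    rw [if_neg hno, add_zero]
    by_cases hc : posVal ε t = false ∧ 1 ≤ μ i0
    · rw [if_pos ⟨hc.1, hc.2, ht⟩, if_pos hc]
    · rw [if_neg (fun hx => hc ⟨hx.1, hx.2.1⟩), if_neg hc]
  · intro i hi hne
    rw [Finset.mem_Icc] at hi
    have hne1 : ¬(posVal ε t = false ∧ 1 ≤ μ i ∧ t = aF k μ i) := by
      intro hc
      rcases Nat.lt_or_ge i i0 with hlt | hge
      · have := aF_lt_aF hS hi.1 hlt (by omega)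
        omega
      · have hgt : i0 < i := by omega
        have := aF_lt_aF hS h1 hgt (by omega)
        omega
    have hne2 : ¬(posVal ε t = true ∧ aF k μ (i+1) < t ∧ t < aF k μ i) := by
      intro hc
      rcases Nat.lt_or_ge i i0 with hlt | hge
      · have : aF k μ i0 ≤ aF k μ (i+1) := aF_le_aF hS (by omega) (by omega) (by omega)
        omega
      · have hgt : i0 < i := by omega
        have : aF k μ i < aF k μ i0 := aF_lt_aF hS h1 hgt (by omega)
        omega
    rw [if_neg hne1, if_neg hne2, add_zero]

lemma weightT_inside {μ : ℕ → ℕ} (r : ℕ → ℕ → ℕ) (hS : ShapeOK n k μ) {i0 t : ℕ}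
    (h1 : 1 ≤ i0) (h2 : i0 ≤ k) (hlo : aF k μ (i0+1) < t) (hhi : t < aF k μ i0)
    (ε : Fin n → Bool) :
    weightT k μ r ε t = if posVal ε t = true then r i0 (t + i0 - k) else 0 := by
  unfold weightT
  rw [Finset.sum_eq_single_of_mem i0 (by rw [Finset.mem_Icc]; omega)]
  · have hno : ¬(posVal ε t = false ∧ 1 ≤ μ i0 ∧ t = aF k μ i0) := by
      intro hc; omega
    rw [if_neg hno, zero_add]
    by_cases hc : posVal ε t = true
    · rw [if_pos ⟨hc, hlo, hhi⟩, if_pos hc]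
    · rw [if_neg (fun hx => hc hx.1), if_neg hc]
  · intro i hi hne
    rw [Finset.mem_Icc] at hi
    have hne1 : ¬(posVal ε t = false ∧ 1 ≤ μ i ∧ t = aF k μ i) := by
      intro hc
      rcases Nat.lt_or_ge i i0 with hlt | hge
      · have : aF k μ i0 ≤ aF k μ i := aF_le_aF hS hi.1 (by omega) (by omega)
        omega
      · have : aF k μ i ≤ aF k μ (i0+1) := aF_le_aF hS (by omega) (by omega) (by omega)
        omega
    have hne2 : ¬(posVal ε t = true ∧ aF k μ (i+1) < t ∧ t < aF k μ i) := by
      intro hc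
      rcases Nat.lt_or_ge i i0 with hlt | hge
      · have : aF k μ i0 ≤ aF k μ (i+1) := aF_le_aF hS (by omega) (by omega) (by omega)
        omega
      · have : aF k μ i ≤ aF k μ (i0+1) := aF_le_aF hS (by omega) (by omega) (by omega)
        omega
    rw [if_neg hne1, if_neg hne2, add_zero]

lemma weightT_above {μ : ℕ → ℕ} (r : ℕ → ℕ → ℕ) (hS : ShapeOK n k μ) {t : ℕ}
    (ht : aF k μ 1 < t) (ε : Fin n → Bool) :
    weightT k μ r ε t = 0 := by
  unfold weightT
  apply Finset.sum_eq_zero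
  intro i hi
  rw [Finset.mem_Icc] at hi
  have hle : aF k μ i ≤ aF k μ 1 := aF_le_aF hS (by omega) hi.1 (by omega)
  rw [if_neg (by intro hc; omega), if_neg (by intro hc; omega), add_zero]

lemma weightT_congr_pos {μ : ℕ → ℕ} (r : ℕ → ℕ → ℕ) {ε η : Fin n → Bool} {t : ℕ}
    (h : posVal ε t = posVal η t) : weightT k μ r ε t = weightT k μ r η t := by
  unfold weightT
  simp only [h]

lemma aF_congr {μ μ' : ℕ → ℕ} (h : ∀ i, 1 ≤ i → μ i = μ' i) {i : ℕ} (hi : 1 ≤ i) :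
    aF k μ i = aF k μ' i := by
  unfold aF
  by_cases hik : i ≤ k
  · rw [if_pos hik, if_pos hik, h i hi]
  · rw [if_neg hik, if_neg hik]

lemma weightT_congr_mu {μ μ' : ℕ → ℕ} (r : ℕ → ℕ → ℕ) (h : ∀ i, 1 ≤ i → μ i = μ' i)
    (ε : Fin n → Bool) (t : ℕ) : weightT k μ r ε t = weightT k μ' r ε t := by
  unfold weightT
  apply Finset.sum_congr rfl
  intro i hi
  rw [Finset.mem_Icc] at hi
  rw [h i hi.1, aF_congr h hi.1, aF_congr h (by omega : 1 ≤ i + 1)]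

lemma weight_congr_mu {μ μ' : ℕ → ℕ} (r : ℕ → ℕ → ℕ) (h : ∀ i, 1 ≤ i → μ i = μ' i)
    (ε : Fin n → Bool) : weight n k μ r ε = weight n k μ' r ε := by
  unfold weight
  exact Finset.sum_congr rfl fun t _ => weightT_congr_mu r h ε t

lemma weightT_bump_outside {μ μ' : ℕ → ℕ} (r : ℕ → ℕ → ℕ) {i0 j0 : ℕ}
    (h1 : 1 ≤ i0) (h2 : i0 ≤ k) (hj : 1 ≤ j0)
    (hb : ∀ i, i ≠ i0 → μ' i = μ i) (hm0 : μ i0 = j0 - 1) (hm1 : μ' i0 = j0)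
    {t : ℕ} (htm : t ≠ k + j0 - i0) (htm1 : t ≠ k + j0 - i0 + 1) (ε : Fin n → Bool) :
    weightT k μ' r ε t = weightT k μ r ε t := by
  have haμ : aF k μ i0 = k + j0 - i0 := by rw [aF_eq h2, hm0]; omega
  have haμ' : aF k μ' i0 = k + j0 - i0 + 1 := by rw [aF_eq h2, hm1]; omega
  unfold weightT
  apply Finset.sum_congr rfl
  intro i hi
  rw [Finset.mem_Icc] at hi
  by_cases hii : i = i0
  · subst hii
    have hn1 : ¬(posVal ε t = false ∧ 1 ≤ μ' i ∧ t = aF k μ' i) := by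
      intro hc
      have := hc.2.2
      rw [haμ'] at this
      omega
    have hn2 : ¬(posVal ε t = false ∧ 1 ≤ μ i ∧ t = aF k μ i) := by
      intro hc
      have := hc.2.2
      rw [haμ] at this
      omega
    rw [if_neg hn1, if_neg hn2, zero_add, zero_add]
    have he : aF k μ' (i+1) = aF k μ (i+1) := by
      unfold aF
      by_cases hik : i + 1 ≤ k
      · rw [if_pos hik, if_pos hik, hb (i+1) (by omega)]
      · rw [if_neg hik, if_neg hik]
    apply if_congr _ rfl rfl
    rw [he, haμ, haμ']
    constructor
    · rintro ⟨hp, hq, hr⟩; exact ⟨hp, hq, by omega⟩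
    · rintro ⟨hp, hq, hr⟩; exact ⟨hp, hq, by omega⟩
  · have hmu : μ' i = μ i := hb i hii
    have haf : aF k μ' i = aF k μ i := by
      unfold aF
      by_cases hik : i ≤ k
      · rw [if_pos hik, if_pos hik, hmu]
      · rw [if_neg hik, if_neg hik]
    rw [hmu, haf]
    congr 1
    apply if_congr _ rfl rfl
    by_cases hi1 : i + 1 = i0
    · rw [← hi1] at haμ haμ'
      rw [haμ, haμ']
      constructor
      · intro hc; exact ⟨hc.1, by omega, hc.2.2⟩
      · intro hc; exact ⟨hc.1, by omega, hc.2.2⟩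
    · have : aF k μ' (i+1) = aF k μ (i+1) := by
        unfold aF
        by_cases hik : i + 1 ≤ k
        · rw [if_pos hik, if_pos hik, hb _ hi1]
        · rw [if_neg hik, if_neg hik]
      rw [this]

lemma weight_split {μ : ℕ → ℕ} (r : ℕ → ℕ → ℕ) (ε : Fin n → Bool) {m : ℕ}
    (hm : 1 ≤ m) (hmn : m + 1 ≤ n) :
    weight n k μ r ε = weightT k μ r ε m + weightT k μ r ε (m+1)
      + ∑ t ∈ ((Finset.Icc 1 n).erase m).erase (m+1), weightT k μ r ε t := by
  unfold weight
  rw [← Finset.add_sum_erase _ _ (show m ∈ Finset.Icc 1 n by rw [Finset.mem_Icc]; omega)]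
  rw [← Finset.add_sum_erase _ _ (show m + 1 ∈ (Finset.Icc 1 n).erase m by
    rw [Finset.mem_erase, Finset.mem_Icc]; omega)]
  ring

end WeightLemmas
-- PART 4 : support predicate
def SuppP (n k : ℕ) (μ : ℕ → ℕ) (ε : Fin n → Bool) : Prop :=
  ∀ s : ℕ, ((Finset.univ.filter (fun t : Fin n => s ≤ (t:ℕ) + 1 ∧ ε t = true)).card
    ≤ ((Finset.Icc 1 k).filter (fun i => s ≤ aF k μ i)).card)

section SuppLemmas
variable {n k : ℕ}

lemma SuppP_mono {μ μ' : ℕ → ℕ} (h : ∀ i, 1 ≤ i → i ≤ k → aF k μ i ≤ aF k μ' i)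
    {ε : Fin n → Bool} (hs : SuppP n k μ ε) : SuppP n k μ' ε := by
  intro s
  refine le_trans (hs s) (Finset.card_le_card ?_)
  intro i hi
  rw [Finset.mem_filter, Finset.mem_Icc] at hi ⊢
  exact ⟨hi.1, le_trans hi.2 (h i hi.1.1 hi.1.2)⟩

lemma SuppP_base {μ : ℕ → ℕ} (hkn : k ≤ n) (hz : ∀ i, 1 ≤ i → i ≤ k → μ i = 0) :
    SuppP n k μ (oneSeq n k) := by
  intro s
  apply Finset.card_le_card_of_injOn (fun t : Fin n => k - (t : ℕ))
  · intro t ht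
    simp only [Finset.mem_coe, Finset.mem_filter, Finset.mem_univ, true_and] at ht
    have htk : (t : ℕ) < k := by
      have := ht.2
      unfold oneSeq at this
      exact of_decide_eq_true this
    simp only [Finset.mem_coe, Finset.mem_filter, Finset.mem_Icc]
    refine ⟨⟨by omega, by omega⟩, ?_⟩
    rw [aF_eq (by omega), hz (k - (t:ℕ)) (by omega) (by omega)]
    omega
  · intro t1 h1 t2 h2 he
    simp only [Finset.coe_filter, Set.mem_setOf_eq] at h1 h2
    have hk1 : (t1 : ℕ) < k := of_decide_eq_true h1.2.2
    have hk2 : (t2 : ℕ) < k := of_decide_eq_true h2.2.2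
    have he' : k - (t1 : ℕ) = k - (t2 : ℕ) := he
    apply Fin.ext
    omega

lemma card_filter_swap_ne {m : ℕ} (h1 : 1 ≤ m) (h2 : m < n) (ε : Fin n → Bool)
    {s : ℕ} (hs : s ≠ m + 1) :
    (Finset.univ.filter (fun t : Fin n => s ≤ (t:ℕ) + 1 ∧ actE (sperm n m) ε t = true)).card
      = (Finset.univ.filter (fun t : Fin n => s ≤ (t:ℕ) + 1 ∧ ε t = true)).card := by
  apply Finset.card_bij (fun t _ => Equiv.swap (⟨m - 1, by omega⟩ : Fin n) ⟨m, h2⟩ t)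
  · intro t ht
    simp only [Finset.mem_filter, Finset.mem_univ, true_and] at ht ⊢
    have heq := actE_sperm_apply h1 h2 ε t
    constructor
    · by_cases hta : t = (⟨m - 1, by omega⟩ : Fin n)
      · rw [hta, Equiv.swap_apply_left]
        show s ≤ m + 1
        have : ((⟨m - 1, by omega⟩ : Fin n) : ℕ) = m - 1 := rfl
        omega
      · by_cases htb : t = (⟨m, h2⟩ : Fin n)
        · rw [htb, Equiv.swap_apply_right]
          show s ≤ (m - 1) + 1
          have h4 : (t : ℕ) = m := by rw [htb]
          have := ht.1
          omega
        · rw [Equiv.swap_apply_of_ne_of_ne hta htb]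
          exact ht.1
    · rw [← heq]; exact ht.2
  · intro t1 _ t2 _ he
    exact (Equiv.swap _ _).injective he
  · intro u hu
    simp only [Finset.mem_filter, Finset.mem_univ, true_and] at hu
    refine ⟨Equiv.swap (⟨m - 1, by omega⟩ : Fin n) ⟨m, h2⟩ u, ?_, Equiv.swap_apply_self _ _ _⟩
    simp only [Finset.mem_filter, Finset.mem_univ, true_and]
    constructor
    · by_cases hta : u = (⟨m - 1, by omega⟩ : Fin n)
      · rw [hta, Equiv.swap_apply_left]
        show s ≤ m + 1
        have : ((⟨m - 1, by omega⟩ : Fin n) : ℕ) = m - 1 := rfl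
        omega
      · by_cases htb : u = (⟨m, h2⟩ : Fin n)
        · rw [htb, Equiv.swap_apply_right]
          show s ≤ (m - 1) + 1
          have h4 : (u : ℕ) = m := by rw [htb]
          have := hu.1
          omega
        · rw [Equiv.swap_apply_of_ne_of_ne hta htb]
          exact hu.1
    · rw [actE_sperm_apply h1 h2, Equiv.swap_apply_self]
      exact hu.2

lemma card_filter_swap_le {m : ℕ} (h1 : 1 ≤ m) (h2 : m < n) (ε : Fin n → Bool) :
    (Finset.univ.filter (fun t : Fin n => m + 1 ≤ (t:ℕ) + 1 ∧ actE (sperm n m) ε t = true)).card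
      ≤ (Finset.univ.filter (fun t : Fin n => m + 1 ≤ (t:ℕ) + 1 ∧ ε t = true)).card + 1 := by
  have hsub : (Finset.univ.filter (fun t : Fin n => m + 1 ≤ (t:ℕ) + 1 ∧ actE (sperm n m) ε t = true))
      ⊆ insert (⟨m, h2⟩ : Fin n) (Finset.univ.filter (fun t : Fin n => m + 1 ≤ (t:ℕ) + 1 ∧ ε t = true)) := by
    intro t ht
    simp only [Finset.mem_filter, Finset.mem_univ, true_and] at ht
    rw [Finset.mem_insert]
    by_cases htb : t = (⟨m, h2⟩ : Fin n)
    · exact Or.inl htb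
    · right
      simp only [Finset.mem_filter, Finset.mem_univ, true_and]
      have hta : (t : ℕ) ≠ m - 1 := by
        intro hc
        have := ht.1
        omega
      have htb' : (t : ℕ) ≠ m := by
        intro hc
        exact htb (Fin.ext hc)
      refine ⟨ht.1, ?_⟩
      rw [actE_sperm_other h1 h2 ε t hta htb'] at ht
      exact ht.2
  calc (Finset.univ.filter (fun t : Fin n => m + 1 ≤ (t:ℕ) + 1 ∧ actE (sperm n m) ε t = true)).card
      ≤ (insert (⟨m, h2⟩ : Fin n) (Finset.univ.filter (fun t : Fin n => m + 1 ≤ (t:ℕ) + 1 ∧ ε t = true))).card :=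
        Finset.card_le_card hsub
    _ ≤ _ := Finset.card_insert_le _ _

lemma SuppP_swap {μ μ' : ℕ → ℕ} {i0 m : ℕ} (h1 : 1 ≤ m) (h2 : m < n)
    (hi1 : 1 ≤ i0) (hi2 : i0 ≤ k)
    (haμ : aF k μ i0 = m) (haμ' : aF k μ' i0 = m + 1)
    (hoth : ∀ i, i ≠ i0 → aF k μ' i = aF k μ i)
    {ε : Fin n → Bool} (hs : SuppP n k μ ε) : SuppP n k μ' (actE (sperm n m) ε) := by
  have hRmono : ∀ s, ((Finset.Icc 1 k).filter (fun i => s ≤ aF k μ i)).card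
      ≤ ((Finset.Icc 1 k).filter (fun i => s ≤ aF k μ' i)).card := by
    intro s
    apply Finset.card_le_card
    intro i hi
    rw [Finset.mem_filter] at hi ⊢
    refine ⟨hi.1, ?_⟩
    by_cases hii : i = i0
    · subst hii; rw [haμ'] ; rw [haμ] at hi; omega
    · rw [hoth i hii]; exact hi.2
  intro s
  by_cases hsm : s = m + 1
  · subst hsm
    have hR : ((Finset.Icc 1 k).filter (fun i => m + 1 ≤ aF k μ i)).card + 1
        ≤ ((Finset.Icc 1 k).filter (fun i => m + 1 ≤ aF k μ' i)).card := by
      have hsub : insert i0 ((Finset.Icc 1 k).filter (fun i => m + 1 ≤ aF k μ i))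
          ⊆ (Finset.Icc 1 k).filter (fun i => m + 1 ≤ aF k μ' i) := by
        intro i hi
        rw [Finset.mem_insert] at hi
        rw [Finset.mem_filter, Finset.mem_Icc]
        rcases hi with hi | hi
        · subst hi; exact ⟨⟨hi1, hi2⟩, by rw [haμ']⟩
        · rw [Finset.mem_filter, Finset.mem_Icc] at hi
          by_cases hii : i = i0
          · subst hii; rw [haμ] at hi; omega
          · rw [hoth i hii]; exact hi
      have hnm : i0 ∉ (Finset.Icc 1 k).filter (fun i => m + 1 ≤ aF k μ i) := by
        rw [Finset.mem_filter]
        intro hc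
        rw [haμ] at hc
        omega
      calc _ = (insert i0 ((Finset.Icc 1 k).filter (fun i => m + 1 ≤ aF k μ i))).card := by
            rw [Finset.card_insert_of_notMem hnm]
        _ ≤ _ := Finset.card_le_card hsub
    calc _ ≤ (Finset.univ.filter (fun t : Fin n => m + 1 ≤ (t:ℕ) + 1 ∧ ε t = true)).card + 1 :=
          card_filter_swap_le h1 h2 ε
      _ ≤ ((Finset.Icc 1 k).filter (fun i => m + 1 ≤ aF k μ i)).card + 1 := by
          have := hs (m+1); omega
      _ ≤ _ := hR
  · rw [card_filter_swap_ne h1 h2 ε hsm]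
    exact le_trans (hs s) (hRmono s)

lemma SuppP_top {μ : ℕ → ℕ} (hS : ShapeOK n k μ) (hk : 1 ≤ k)
    {ε : Fin n → Bool} (hs : SuppP n k μ ε) {t : Fin n} (ht : aF k μ 1 < (t:ℕ) + 1) :
    ε t = false := by
  rcases Bool.eq_false_or_eq_true (ε t) with hct | hct
  swap
  · exact hct
  exfalso
  have hle := hs ((t:ℕ)+1)
  have hRz : ((Finset.Icc 1 k).filter (fun i => (t:ℕ)+1 ≤ aF k μ i)).card = 0 := by
    rw [Finset.card_eq_zero, Finset.filter_eq_empty_iff]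
    intro i hi
    rw [Finset.mem_Icc] at hi
    have : aF k μ i ≤ aF k μ 1 := aF_le_aF hS (by omega) hi.1 (by omega)
    omega
  have hLp : 0 < (Finset.univ.filter (fun u : Fin n => (t:ℕ)+1 ≤ (u:ℕ) + 1 ∧ ε u = true)).card := by
    rw [Finset.card_pos]
    refine ⟨t, ?_⟩
    simp only [Finset.mem_filter, Finset.mem_univ, true_and]
    exact ⟨le_refl _, hct⟩
  omega

lemma SuppP_forced {μ : ℕ → ℕ} (hS : ShapeOK n k μ) (hk : 1 ≤ k) (hkn : k < n)
    {ε : Fin n → Bool} (hs : SuppP n k μ ε)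
    (hcount : (Finset.univ.filter fun t => ε t = true).card = k)
    {i0 : ℕ} (hi1 : 1 ≤ i0) (hi2 : i0 ≤ k) (hmu : μ i0 = 0) :
    ε ⟨k - i0, by omega⟩ = true := by
  have haf : aF k μ i0 = k + 1 - i0 := by rw [aF_eq hi2, hmu]
  rcases Bool.eq_false_or_eq_true (ε (⟨k - i0, by omega⟩ : Fin n)) with hcf | hcf
  · exact hcf
  exfalso
  -- upper part bound
  have hB := hs (k + 2 - i0)
  have hRcard : ((Finset.Icc 1 k).filter (fun i => k + 2 - i0 ≤ aF k μ i)).card = i0 - 1 := by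
    have : (Finset.Icc 1 k).filter (fun i => k + 2 - i0 ≤ aF k μ i) = Finset.Icc 1 (i0 - 1) := by
      ext i
      rw [Finset.mem_filter, Finset.mem_Icc, Finset.mem_Icc]
      constructor
      · intro ⟨hi, hv⟩
        rcases Nat.lt_or_ge i i0 with hlt | hge
        · exact ⟨hi.1, by omega⟩
        · exfalso
          have : aF k μ i ≤ aF k μ i0 := aF_le_aF hS hi1 hge (by omega)
          omega
      · intro hi
        have hii : i < i0 := by omega
        refine ⟨⟨hi.1, by omega⟩, ?_⟩
        have : aF k μ i0 < aF k μ i := aF_lt_aF hS hi.1 hii (by omega)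
        omega
    rw [this, Nat.card_Icc]
    omega
  -- decompose
  have hsplit : (Finset.univ.filter fun t : Fin n => ε t = true) ⊆
      (Finset.univ.filter (fun t : Fin n => (t:ℕ) + 1 ≤ k - i0 ∧ ε t = true)) ∪
      (Finset.univ.filter (fun t : Fin n => k + 2 - i0 ≤ (t:ℕ) + 1 ∧ ε t = true)) := by
    intro t ht
    simp only [Finset.mem_filter, Finset.mem_univ, true_and] at ht
    simp only [Finset.mem_union, Finset.mem_filter, Finset.mem_univ, true_and]
    rcases Nat.lt_or_ge ((t:ℕ) + 1) (k + 1 - i0) with hlt | hge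
    · left; exact ⟨by omega, ht⟩
    · rcases Nat.lt_or_ge ((t:ℕ) + 1) (k + 2 - i0) with hlt2 | hge2
      · exfalso
        have hv : ((⟨k - i0, by omega⟩ : Fin n) : ℕ) = k - i0 := rfl
        have : t = (⟨k - i0, by omega⟩ : Fin n) := Fin.ext (by rw [hv]; omega)
        rw [this, hcf] at ht
        exact Bool.false_ne_true ht
      · right; exact ⟨hge2, ht⟩
  have hA : (Finset.univ.filter (fun t : Fin n => (t:ℕ) + 1 ≤ k - i0 ∧ ε t = true)).card ≤ k - i0 := by
    have := Finset.card_le_card_of_injOn (fun t : Fin n => (t:ℕ))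
      (s := Finset.univ.filter (fun t : Fin n => (t:ℕ) + 1 ≤ k - i0 ∧ ε t = true))
      (t := Finset.range (k - i0)) ?_ ?_
    · rw [Finset.card_range] at this; exact this
    · intro t ht
      rw [Finset.mem_coe, Finset.mem_filter] at ht
      rw [Finset.mem_coe, Finset.mem_range]
      have := ht.2.1
      show (t:ℕ) < k - i0
      omega
    · intro t1 _ t2 _ he
      exact Fin.ext he
  have := Finset.card_union_le
    (Finset.univ.filter (fun t : Fin n => (t:ℕ) + 1 ≤ k - i0 ∧ ε t = true))
    (Finset.univ.filter (fun t : Fin n => k + 2 - i0 ≤ (t:ℕ) + 1 ∧ ε t = true))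
  have hcsub := Finset.card_le_card hsplit
  omega

end SuppLemmas
-- PART 5 : the inductive step
def InvP (n k : ℕ) (μ : ℕ → ℕ) (r : ℕ → ℕ → ℕ) (x : M n k) : Prop :=
  ∀ ε : Stt n k, x ε ∈ Ozero (weight n k μ r ε.1) ∧ (x ε ≠ 0 → SuppP n k μ ε.1)

section StepLemma
variable {n k : ℕ}

lemma posVal_swap_m {m : ℕ} (h1 : 1 ≤ m) (h2 : m < n) (ε : Fin n → Bool) :
    posVal (actE (sperm n m) ε) m = posVal ε (m+1) := by
  rw [posVal_eq h1 (le_of_lt h2), posVal_eq (by omega : 1 ≤ m + 1) (by omega : m + 1 ≤ n)]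
  rw [actE_sperm_a h1 h2]
  congr 1

lemma posVal_swap_m1 {m : ℕ} (h1 : 1 ≤ m) (h2 : m < n) (ε : Fin n → Bool) :
    posVal (actE (sperm n m) ε) (m+1) = posVal ε m := by
  rw [posVal_eq (by omega : 1 ≤ m + 1) (by omega : m + 1 ≤ n), posVal_eq h1 (le_of_lt h2)]
  have : (⟨m + 1 - 1, by omega⟩ : Fin n) = ⟨m, h2⟩ := Fin.ext (by show m + 1 - 1 = m; omega)
  rw [this, actE_sperm_b h1 h2]

lemma posVal_swap_other {m t : ℕ} (h1 : 1 ≤ m) (h2 : m < n) (ε : Fin n → Bool)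
    (ht1 : t ≠ m) (ht2 : t ≠ m + 1) :
    posVal (actE (sperm n m) ε) t = posVal ε t := by
  unfold posVal
  by_cases ht : 1 ≤ t ∧ t ≤ n
  · rw [dif_pos ht, dif_pos ht]
    exact actE_sperm_other h1 h2 ε _ (by show t - 1 ≠ m - 1; omega) (by show t - 1 ≠ m; omega)
  · rw [dif_neg ht, dif_neg ht]

variable {μ μ' : ℕ → ℕ} {r : ℕ → ℕ → ℕ} {i0 j0 : ℕ}

lemma haF_mu (hi2 : i0 ≤ k) (hj1 : 1 ≤ j0) (hm0 : μ i0 = j0 - 1) :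
    aF k μ i0 = k + j0 - i0 := by
  rw [aF_eq hi2, hm0]; omega

lemma haF_mu' (hi2 : i0 ≤ k) (hj1 : 1 ≤ j0) (hm1 : μ' i0 = j0) :
    aF k μ' i0 = k + j0 - i0 + 1 := by
  rw [aF_eq hi2, hm1]; omega

lemma wT_A_eval (hi1 : 1 ≤ i0) (hi2 : i0 ≤ k) (hj1 : 1 ≤ j0)
    (hS : ShapeOK n k μ) (hm0 : μ i0 = j0 - 1) (r : ℕ → ℕ → ℕ) (η : Fin n → Bool) :
    weightT k μ r η (k + j0 - i0) =
      if posVal η (k + j0 - i0) = false ∧ 2 ≤ j0 then r i0 (j0-1) - 1 else 0 := by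
  rw [weightT_at_aF r hS hi1 hi2 (haF_mu hi2 hj1 hm0).symm η, hm0]
  apply if_congr _ rfl rfl
  constructor
  · rintro ⟨hp, hq⟩; exact ⟨hp, by omega⟩
  · rintro ⟨hp, hq⟩; exact ⟨hp, by omega⟩

lemma wT_B_eval (hi1 : 1 ≤ i0) (hi2 : i0 ≤ k) (hj1 : 1 ≤ j0)
    (hS : ShapeOK n k μ) (hm0 : μ i0 = j0 - 1) (hprev : 2 ≤ i0 → j0 ≤ μ (i0 - 1))
    (r : ℕ → ℕ → ℕ) (η : Fin n → Bool) :
    weightT k μ r η (k + j0 - i0 + 1) =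
      if 2 ≤ i0 ∧ posVal η (k + j0 - i0 + 1) = true then r (i0-1) j0 else 0 := by
  by_cases hio : 2 ≤ i0
  · have hlo : aF k μ ((i0 - 1) + 1) < k + j0 - i0 + 1 := by
      rw [show i0 - 1 + 1 = i0 by omega, haF_mu hi2 hj1 hm0]
      omega
    have hhi : k + j0 - i0 + 1 < aF k μ (i0 - 1) := by
      rw [aF_eq (by omega : i0 - 1 ≤ k)]
      have := hprev hio
      omega
    rw [weightT_inside r hS (by omega : 1 ≤ i0 - 1) (by omega : i0 - 1 ≤ k) hlo hhi η]
    rw [show (k + j0 - i0 + 1) + (i0 - 1) - k = j0 by omega]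
    by_cases hp : posVal η (k + j0 - i0 + 1) = true
    · rw [if_pos hp, if_pos ⟨hio, hp⟩]
    · rw [if_neg hp, if_neg (fun hc => hp hc.2)]
  · have hi0 : i0 = 1 := by omega
    have habove : aF k μ 1 < k + j0 - i0 + 1 := by
      rw [← hi0, haF_mu hi2 hj1 hm0]
      omega
    rw [weightT_above r hS habove η, if_neg (fun hc => hio hc.1)]

lemma wT_A'_eval (hi1 : 1 ≤ i0) (hi2 : i0 ≤ k) (hj1 : 1 ≤ j0)
    (hS : ShapeOK n k μ) (hS' : ShapeOK n k μ')
    (hm0 : μ i0 = j0 - 1) (hm1 : μ' i0 = j0) (hb : ∀ i, i ≠ i0 → μ' i = μ i)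
    (r : ℕ → ℕ → ℕ) (η : Fin n → Bool) :
    weightT k μ' r η (k + j0 - i0) =
      if posVal η (k + j0 - i0) = true then r i0 j0 else 0 := by
  have hlo : aF k μ' (i0 + 1) < k + j0 - i0 := by
    by_cases hik : i0 + 1 ≤ k
    · rw [aF_eq hik, hb (i0+1) (by omega)]
      have := hS.dec i0 hi1
      rw [hm0] at this
      omega
    · unfold aF
      rw [if_neg hik]
      omega
  have hhi : k + j0 - i0 < aF k μ' i0 := by
    rw [haF_mu' hi2 hj1 hm1]
    omega
  rw [weightT_inside r hS' hi1 hi2 hlo hhi η]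
  rw [show (k + j0 - i0) + i0 - k = j0 by omega]

lemma wT_B'_eval (hi1 : 1 ≤ i0) (hi2 : i0 ≤ k) (hj1 : 1 ≤ j0)
    (hS' : ShapeOK n k μ') (hm1 : μ' i0 = j0) (r : ℕ → ℕ → ℕ) (η : Fin n → Bool) :
    weightT k μ' r η (k + j0 - i0 + 1) =
      if posVal η (k + j0 - i0 + 1) = false then r i0 j0 - 1 else 0 := by
  rw [weightT_at_aF r hS' hi1 hi2 (haF_mu' hi2 hj1 hm1).symm η, hm1]
  by_cases hp : posVal η (k + j0 - i0 + 1) = false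
  · rw [if_pos ⟨hp, hj1⟩, if_pos hp]
  · rw [if_neg (fun hc => hp hc.1), if_neg hp]

lemma step_lemma (hk : 1 ≤ k) (hkn : k < n) (r : ℕ → ℕ → ℕ)
    (hi1 : 1 ≤ i0) (hi2 : i0 ≤ k) (hj1 : 1 ≤ j0)
    (hS : ShapeOK n k μ) (hS' : ShapeOK n k μ')
    (hm0 : μ i0 = j0 - 1) (hm1 : μ' i0 = j0) (hb : ∀ i, i ≠ i0 → μ' i = μ i)
    (hprev : 2 ≤ i0 → j0 ≤ μ (i0 - 1))
    (hρ : 1 ≤ r i0 j0)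
    (hrow : 2 ≤ j0 → r i0 j0 < r i0 (j0 - 1))
    (hcol : 2 ≤ i0 → r i0 j0 < r (i0 - 1) j0)
    {x : M n k} (hx : InvP n k μ r x) :
    InvP n k μ' r (Thk n k (k + j0 - i0) x - (v ^ (r i0 j0) / qint (r i0 j0)) • x) := by
  set m := k + j0 - i0 with hm_def
  have hm : 1 ≤ m := by omega
  have hmn : m < n := by
    have h1 : aF k μ' i0 ≤ aF k μ' 1 := aF_le_aF hS' (by omega) hi1 (by omega)
    have h2 : aF k μ' 1 = k + μ' 1 := by rw [aF_eq (by omega : 1 ≤ k)]; omega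
    have h3 : μ' 1 ≤ n - k := hS'.le
    have h4 := haF_mu' hi2 hj1 hm1
    omega
  have haμ : aF k μ i0 = m := haF_mu hi2 hj1 hm0
  have haμ' : aF k μ' i0 = m + 1 := haF_mu' hi2 hj1 hm1
  have hAFoth : ∀ i, i ≠ i0 → aF k μ' i = aF k μ i := by
    intro i hi
    unfold aF
    by_cases hik : i ≤ k
    · rw [if_pos hik, if_pos hik, hb i hi]
    · rw [if_neg hik, if_neg hik]
  have hAFmono : ∀ i, 1 ≤ i → i ≤ k → aF k μ i ≤ aF k μ' i := by
    intro i h1 h2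
    by_cases hi : i = i0
    · subst hi; rw [haμ, haμ']; omega
    · rw [hAFoth i hi]
  set ρ := r i0 j0 with hρ_def
  intro ε'
  set sε' := actS (sperm n m) ε' with hsdef
  have happ : (Thk n k m x - (v ^ ρ / qint ρ) • x) ε'
      = Thk n k m x ε' - (v ^ ρ / qint ρ) * x ε' := by
    rw [Pi.sub_apply, Pi.smul_apply, smul_eq_mul]
  have hc_mem : v ^ ρ / qint ρ ∈ Ozero (2 * ρ - 1) := Ozero_c_mem hρ
  -- weight computations
  set S := ∑ t ∈ ((Finset.Icc 1 n).erase m).erase (m+1), weightT k μ r ε'.1 t with hSdef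
  have hmemT : ∀ t ∈ ((Finset.Icc 1 n).erase m).erase (m+1), t ≠ m ∧ t ≠ m + 1 := by
    intro t ht
    rw [Finset.mem_erase, Finset.mem_erase] at ht
    exact ⟨ht.2.1, ht.1⟩
  have E1 : weight n k μ r ε'.1 = weightT k μ r ε'.1 m + weightT k μ r ε'.1 (m+1) + S :=
    weight_split r ε'.1 hm (by omega)
  have E2 : weight n k μ' r ε'.1 = weightT k μ' r ε'.1 m + weightT k μ' r ε'.1 (m+1) + S := by
    rw [weight_split r ε'.1 hm (by omega)]
    congr 1
    apply Finset.sum_congr rfl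
    intro t ht
    exact weightT_bump_outside r hi1 hi2 hj1 hb hm0 hm1 (hmemT t ht).1 (hmemT t ht).2 ε'.1
  have E3 : weight n k μ r sε'.1 = weightT k μ r sε'.1 m + weightT k μ r sε'.1 (m+1) + S := by
    rw [weight_split r sε'.1 hm (by omega)]
    congr 1
    apply Finset.sum_congr rfl
    intro t ht
    exact weightT_congr_pos r (posVal_swap_other hm hmn ε'.1 (hmemT t ht).1 (hmemT t ht).2)
  -- posVal facts for sε'
  have hps1 : posVal sε'.1 m = posVal ε'.1 (m+1) := posVal_swap_m hm hmn ε'.1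
  have hps2 : posVal sε'.1 (m+1) = posVal ε'.1 m := posVal_swap_m1 hm hmn ε'.1
  -- evaluated weights
  have hA := wT_A_eval hi1 hi2 hj1 hS hm0 r
  have hB := wT_B_eval hi1 hi2 hj1 hS hm0 hprev r
  have hA' := wT_A'_eval hi1 hi2 hj1 hS hS' hm0 hm1 hb r
  have hB' := wT_B'_eval hi1 hi2 hj1 hS' hm1 r
  -- support transfer
  have hsupp_diag : x ε' ≠ 0 → SuppP n k μ' ε'.1 := by
    intro hne
    exact SuppP_mono hAFmono ((hx ε').2 hne)
  have hsupp_cross : x sε' ≠ 0 → SuppP n k μ' ε'.1 := by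
    intro hne
    have hsw := SuppP_swap hm hmn hi1 hi2 haμ haμ' hAFoth ((hx sε').2 hne)
    have : actE (sperm n m) sε'.1 = ε'.1 := by
      have := actS_invol (k := k) hm hmn ε'
      rw [← hsdef] at this
      exact congrArg Subtype.val this
    rwa [this] at hsw
  -- the Thk application
  rw [Thk_apply hm hmn x ε'] at happ
  rw [← hm_def] at hA hB hA' hB'
  rw [← hsdef] at happ
  -- support helpers
  have htop : ∀ η : Stt n k, SuppP n k μ η.1 → i0 = 1 → posVal η.1 (m+1) = false := by
    intro η hδ hi0
    rw [posVal_eq (by omega : 1 ≤ m + 1) (by omega : m + 1 ≤ n)]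
    apply SuppP_top hS hk hδ
    have hv : ((⟨m + 1 - 1, by omega⟩ : Fin n) : ℕ) = m := by show m + 1 - 1 = m; omega
    have ha1 : aF k μ 1 = m := by rw [← hi0]; exact haμ
    omega
  have hforced : ∀ η : Stt n k, SuppP n k μ η.1 → j0 = 1 → posVal η.1 m = true := by
    intro η hδ hj0
    rw [posVal_eq hm (by omega : m ≤ n)]
    have := SuppP_forced hS hk hkn hδ η.2 hi1 hi2 (by omega : μ i0 = 0)
    have he : (⟨m - 1, by omega⟩ : Fin n) = ⟨k - i0, by omega⟩ :=
      Fin.ext (by show m - 1 = k - i0; omega)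
    rw [he]
    exact this
  have hsupp_goal : (Thk n k m x - (v ^ ρ / qint ρ) • x) ε' ≠ 0 → SuppP n k μ' ε'.1 := by
    intro hne
    by_cases hx0 : x ε' = 0
    · by_cases hxs : x sε' = 0
      · exfalso
        apply hne
        rw [happ, hx0, hxs]
        split_ifs <;> simp
      · exact hsupp_cross hxs
    · exact hsupp_diag hx0
  rcases Bool.eq_false_or_eq_true (posVal ε'.1 m) with hP1 | hP1 <;>
    rcases Bool.eq_false_or_eq_true (posVal ε'.1 (m+1)) with hP2 | hP2
  -- case (+,+)
  · refine ⟨?_, hsupp_goal⟩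
    rw [happ, if_neg (by rw [hP1, hP2]; simp), if_pos (by rw [hP1, hP2])]
    have hW' : weight n k μ' r ε'.1 = ρ + S := by
      rw [E2, hA' ε'.1, hB' ε'.1, if_pos hP1,
        if_neg (by rw [hP2]; simp), add_zero]
    rw [hW']
    by_cases hx0 : x ε' = 0
    · rw [hx0, mul_zero, mul_zero, sub_zero]
      exact Ozero_zero _
    · have hsup := (hx ε').2 hx0
      have hio : 2 ≤ i0 := by
        by_contra hio
        have ht := htop ε' hsup (by omega)
        rw [hP2] at ht
        simp at ht
      have hWμ : weight n k μ r ε'.1 = r (i0-1) j0 + S := by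
        rw [E1, hA ε'.1, hB ε'.1, if_neg (by rw [hP1]; simp), if_pos ⟨hio, hP2⟩, zero_add]
      have hx1 : x ε' ∈ Ozero (ρ + S + 1) := by
        have hmem := (hx ε').1
        rw [hWμ] at hmem
        exact Ozero_mono (by have := hcol hio; omega) hmem
      rw [sub_eq_add_neg]
      refine Ozero_add (Ozero_neg_vinv_mul hx1) (Ozero_neg ?_)
      exact Ozero_mono (by omega) (Ozero_mul hc_mem hx1)
  -- case (+,-)
  · refine ⟨?_, hsupp_goal⟩
    rw [happ, if_pos ⟨hP1, hP2⟩]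
    have hW' : weight n k μ' r ε'.1 = ρ + (ρ - 1) + S := by
      rw [E2, hA' ε'.1, hB' ε'.1, if_pos hP1, if_pos hP2]
    rw [hW']
    have hWμ : weight n k μ r ε'.1 = S := by
      rw [E1, hA ε'.1, hB ε'.1, if_neg (by rw [hP1]; simp),
        if_neg (by rw [hP2]; simp), add_zero, zero_add]
    rw [sub_eq_add_neg]
    refine Ozero_add ?_ (Ozero_neg ?_)
    · by_cases hxs : x sε' = 0
      · rw [hxs]; exact Ozero_zero _
      · have hsupS := (hx sε').2 hxs
        have hio : 2 ≤ i0 := by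
          by_contra hio
          have ht := htop sε' hsupS (by omega)
          rw [hps2, hP1] at ht
          simp at ht
        have hjo : 2 ≤ j0 := by
          by_contra hjo
          have hf := hforced sε' hsupS (by omega)
          rw [hps1, hP2] at hf
          exact Bool.false_ne_true hf
        have hWs : weight n k μ r sε'.1 = (r i0 (j0-1) - 1) + r (i0-1) j0 + S := by
          rw [E3, hA sε'.1, hB sε'.1, hps1, hps2, hP1, hP2,
            if_pos ⟨rfl, hjo⟩, if_pos ⟨hio, rfl⟩]
        have hmem := (hx sε').1
        rw [hWs] at hmem
        exact Ozero_mono (by have := hrow hjo; have := hcol hio; omega) hmem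
    · have hmem := (hx ε').1
      rw [hWμ] at hmem
      exact Ozero_mono (by omega) (Ozero_mul hc_mem hmem)
  -- case (-,+)
  · refine ⟨?_, hsupp_goal⟩
    rw [happ, if_neg (by rw [hP1]; simp), if_neg (by rw [hP1, hP2]; simp)]
    have hW' : weight n k μ' r ε'.1 = S := by
      rw [E2, hA' ε'.1, hB' ε'.1, if_neg (by rw [hP1]; simp),
        if_neg (by rw [hP2]; simp), add_zero, zero_add]
    rw [hW']
    rw [sub_eq_add_neg]
    refine Ozero_add (Ozero_add ?_ ?_) ?_
    · by_cases hxs : x sε' = 0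
      · rw [hxs]; exact Ozero_zero _
      · have hWs : weight n k μ r sε'.1 = S := by
          rw [E3, hA sε'.1, hB sε'.1, hps1, hps2, hP1, hP2,
            if_neg (by simp), if_neg (by simp), add_zero, zero_add]
        have hmem := (hx sε').1
        rw [hWs] at hmem
        exact hmem
    · by_cases hx0 : x ε' = 0
      · rw [hx0, mul_zero]; exact Ozero_zero _
      · have hsup := (hx ε').2 hx0
        have hio : 2 ≤ i0 := by
          by_contra hio
          have ht := htop ε' hsup (by omega)
          rw [hP2] at ht
          simp at ht
        have hjo : 2 ≤ j0 := by
          by_contra hjo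
          have hf := hforced ε' hsup (by omega)
          rw [hP1] at hf
          exact Bool.false_ne_true hf
        have hWμ : weight n k μ r ε'.1 = (r i0 (j0-1) - 1) + r (i0-1) j0 + S := by
          rw [E1, hA ε'.1, hB ε'.1, if_pos ⟨hP1, hjo⟩, if_pos ⟨hio, hP2⟩]
        have hmem := (hx ε').1
        rw [hWμ] at hmem
        have hx1 : x ε' ∈ Ozero (S + 1) :=
          Ozero_mono (by have := hcol hio; omega) hmem
        exact Ozero_vsub_mul hx1
    · by_cases hx0 : x ε' = 0
      · rw [hx0, mul_zero]
        exact Ozero_neg (Ozero_zero _)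
      · have hsup := (hx ε').2 hx0
        have hjo : 2 ≤ j0 := by
          by_contra hjo
          have hf := hforced ε' hsup (by omega)
          rw [hP1] at hf
          exact Bool.false_ne_true hf
        have hio : 2 ≤ i0 := by
          by_contra hio
          have ht := htop ε' hsup (by omega)
          rw [hP2] at ht
          simp at ht
        have hWμ : weight n k μ r ε'.1 = (r i0 (j0-1) - 1) + r (i0-1) j0 + S := by
          rw [E1, hA ε'.1, hB ε'.1, if_pos ⟨hP1, hjo⟩, if_pos ⟨hio, hP2⟩]
        have hmem := (hx ε').1
        rw [hWμ] at hmem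
        exact Ozero_neg (Ozero_mono (by have := hcol hio; omega) (Ozero_mul hc_mem hmem))
  -- case (-,-)
  · refine ⟨?_, hsupp_goal⟩
    rw [happ, if_neg (by rw [hP1]; simp), if_pos (by rw [hP1, hP2])]
    have hW' : weight n k μ' r ε'.1 = (ρ - 1) + S := by
      rw [E2, hA' ε'.1, hB' ε'.1, if_neg (by rw [hP1]; simp), if_pos hP2, zero_add]
    rw [hW']
    by_cases hx0 : x ε' = 0
    · rw [hx0, mul_zero, mul_zero, sub_zero]
      exact Ozero_zero _
    · have hsup := (hx ε').2 hx0
      have hjo : 2 ≤ j0 := by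
        by_contra hjo
        have hf := hforced ε' hsup (by omega)
        rw [hP1] at hf
        exact Bool.false_ne_true hf
      have hWμ : weight n k μ r ε'.1 = (r i0 (j0-1) - 1) + S := by
        rw [E1, hA ε'.1, hB ε'.1, if_pos ⟨hP1, hjo⟩, if_neg (by rw [hP2]; simp), add_zero]
      have hx1 : x ε' ∈ Ozero ((ρ - 1) + S + 1) := by
        have hmem := (hx ε').1
        rw [hWμ] at hmem
        exact Ozero_mono (by have := hrow hjo; omega) hmem
      rw [sub_eq_add_neg]
      refine Ozero_add (Ozero_neg_vinv_mul hx1) (Ozero_neg ?_)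
      exact Ozero_mono (by omega) (Ozero_mul hc_mem hx1)

end StepLemma
-- PART 6 : assembling the induction
section Assemble
variable {n k : ℕ}

/-- A row of boxes, listed right to left. -/
def rowListB (i c : ℕ) : List (ℕ × ℕ) := (List.range c).reverse.map fun j' => (i, j'+1)

/-- The first i rows of boxes in processing-reversed order. -/
def procList (lam : ℕ → ℕ) : ℕ → List (ℕ × ℕ)
  | 0 => []
  | i+1 => rowListB (i+1) (lam (i+1)) ++ procList lam i

lemma boxList_eq_proc (lam : ℕ → ℕ) : ∀ K, boxList K lam = procList lam K := by
  intro K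
  induction K with
  | zero => rfl
  | succ K ih =>
    unfold boxList procList
    rw [List.range_succ, List.reverse_append]
    unfold boxList at ih
    rw [show (([K].reverse : List ℕ)) = [K] from rfl]
    rw [List.singleton_append, List.map_cons, List.flatten_cons]
    rw [ih]
    rfl

lemma rowListB_succ (i c : ℕ) : rowListB i (c+1) = (i, c+1) :: rowListB i c := by
  unfold rowListB
  rw [List.range_succ, List.reverse_append]
  rfl

/-- The truncated shape: full rows above i, c boxes in row i. -/
def Shape (lam : ℕ → ℕ) (i c : ℕ) : ℕ → ℕ := fun i' =>
  if i' < i then lam i' else if i' = i then c else 0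

lemma ShapeOK_shape (hkn : k < n) (lam : ℕ → ℕ) (hY : IsYoung n k lam)
    {i c : ℕ} (h1 : 1 ≤ i) (h2 : i ≤ k) (hc : c ≤ lam i) :
    ShapeOK n k (Shape lam i c) := by
  obtain ⟨hdec, hle, hzero⟩ := hY
  have hmono : ∀ a b, 1 ≤ a → a ≤ b → lam b ≤ lam a := by
    intro a b ha hab
    induction b with
    | zero => omega
    | succ j ih =>
      rcases Nat.lt_or_ge a (j+1) with hlt | hge
      · exact le_trans (hdec j (by omega)) (ih (by omega))
      · have : a = j + 1 := by omega
        rw [this]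
  constructor
  · intro i' hi'
    unfold Shape
    by_cases ha : i' + 1 < i
    · rw [if_pos ha, if_pos (by omega : i' < i)]
      exact hdec i' hi'
    · by_cases hb : i' + 1 = i
      · rw [if_neg ha, if_pos hb, if_pos (by omega : i' < i)]
        have h2' := hdec i' hi'
        rw [hb] at h2'
        omega
      · rw [if_neg ha, if_neg hb]
        exact Nat.zero_le _
  · unfold Shape
    split_ifs with u1 u2
    · exact hle
    · exact le_trans hc (le_trans (hmono 1 i (by omega) (by omega)) hle)
    · omega
  · intro i' hi'
    unfold Shape
    split_ifs with u1 u2 <;> omega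

lemma SuppP_congr_mu {μ μ' : ℕ → ℕ} (h : ∀ i, 1 ≤ i → μ i = μ' i) {ε : Fin n → Bool}
    (hs : SuppP n k μ ε) : SuppP n k μ' ε := by
  intro s
  refine le_trans (hs s) (le_of_eq ?_)
  congr 1
  apply Finset.filter_congr
  intro i hi
  rw [Finset.mem_Icc] at hi
  rw [aF_congr h hi.1]

lemma InvP_congr_mu {μ μ' : ℕ → ℕ} (r : ℕ → ℕ → ℕ) (h : ∀ i, 1 ≤ i → μ i = μ' i)
    {x : M n k} (hx : InvP n k μ r x) : InvP n k μ' r x := by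
  intro ε
  refine ⟨?_, fun hne => SuppP_congr_mu h ((hx ε).2 hne)⟩
  rw [← weight_congr_mu r h ε.1]
  exact (hx ε).1

lemma weight_zero_shape {μ : ℕ → ℕ} (r : ℕ → ℕ → ℕ) (hk : 1 ≤ k) (hkn : k < n)
    (hS : ShapeOK n k μ) (hz : ∀ i, 1 ≤ i → μ i = 0) :
    weight n k μ r (oneSeq n k) = 0 := by
  unfold weight
  apply Finset.sum_eq_zero
  intro t ht
  rw [Finset.mem_Icc] at ht
  by_cases htk : t ≤ k
  · have haf : t = aF k μ (k + 1 - t) := by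
      rw [aF_eq (by omega), hz (k+1-t) (by omega)]
      omega
    rw [weightT_at_aF r hS (by omega) (by omega) haf (oneSeq n k)]
    rw [if_neg]
    intro hcon
    rw [hz (k+1-t) (by omega)] at hcon
    omega
  · apply weightT_above r hS
    rw [aF_eq hk, hz 1 (by omega)]
    omega

lemma InvP_base (hk : 1 ≤ k) (hkn : k < n) (lam : ℕ → ℕ) (hY : IsYoung n k lam)
    (r : ℕ → ℕ → ℕ) :
    InvP n k (Shape lam 1 0) r (bv (oneS n k hkn.le)) := by
  have hz : ∀ i, 1 ≤ i → Shape lam 1 0 i = 0 := by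
    intro i hi
    unfold Shape
    split_ifs <;> omega
  have hS : ShapeOK n k (Shape lam 1 0) :=
    ShapeOK_shape hkn lam hY (by omega) hk (by omega)
  intro ε
  constructor
  · by_cases hε : ε = oneS n k hkn.le
    · subst hε
      have : bv (oneS n k hkn.le) (oneS n k hkn.le) = 1 := Pi.single_eq_same _ _
      rw [this]
      have hw : weight n k (Shape lam 1 0) r (oneS n k hkn.le).1 = 0 :=
        weight_zero_shape r hk hkn hS hz
      rw [hw]
      exact Ozero_one
    · have : bv (oneS n k hkn.le) ε = 0 := Pi.single_eq_of_ne hε _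
      rw [this]
      exact Ozero_zero _
  · intro hne
    have hε : ε = oneS n k hkn.le := by
      by_contra hc
      exact hne (Pi.single_eq_of_ne hc _)
    rw [hε]
    exact SuppP_base hkn.le (fun i hi _ => hz i hi)

lemma procList_pos (lam : ℕ → ℕ) {i : ℕ} (h : 1 ≤ i) :
    procList lam i = rowListB i (lam i) ++ procList lam (i-1) := by
  obtain ⟨j, rfl⟩ : ∃ j, i = j + 1 := ⟨i - 1, by omega⟩
  show procList lam (j+1) = rowListB (j+1) (lam (j+1)) ++ procList lam (j+1-1)
  rfl

end Assemble
/-- For any positive integers r_(ij) on the boxes of λ with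
r_(ij) > r_(i,j+1) and r_(ij) > r_(i+1,j) (and r = 0 off λ), X_λ·𝟏 ∈ 𝓛_λ. -/
theorem kl_weight_bound (n k : ℕ) (hk : 0 < k) (hkn : k < n)
    (lam : ℕ → ℕ) (hY : IsYoung n k lam) (r : ℕ → ℕ → ℕ)
    (hpos : ∀ i j, 1 ≤ i → 1 ≤ j → j ≤ lam i →
      0 < r i j ∧ r i (j + 1) < r i j ∧ r (i + 1) j < r i j)
    (hoff : ∀ i j, ¬(1 ≤ i ∧ 1 ≤ j ∧ j ≤ lam i) → r i j = 0) :
    Xop n k lam r (bv (oneS n k hkn.le)) ∈ Lset n k lam r := by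
  classical
  set fac : ℕ × ℕ → Module.End F (M n k) := fun b =>
    (Thk n k (k + b.2 - b.1) - (v ^ r b.1 b.2 / qint (r b.1 b.2)) • (1 : Module.End F (M n k))
      : Module.End F (M n k)) with hfac
  have hstep_apply : ∀ i c (x : M n k), (fac (i, c+1)) x
      = Thk n k (k + (c+1) - i) x - (v ^ (r i (c+1)) / qint (r i (c+1))) • x := by
    intro i c x
    rw [hfac]
    simp only [LinearMap.sub_apply, LinearMap.smul_apply, Module.End.one_apply]
  have hmono : ∀ a b, 1 ≤ a → a ≤ b → lam b ≤ lam a := by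
    intro a b ha hab
    induction b with
    | zero => omega
    | succ j ih =>
      rcases Nat.lt_or_ge a (j+1) with hlt | hge
      · exact le_trans (hY.1 j (by omega)) (ih (by omega))
      · have : a = j + 1 := by omega
        rw [this]
  -- within-row induction
  have rowstep : ∀ i, 1 ≤ i → i ≤ k →
      InvP n k (Shape lam i 0) r ((((rowListB i 0 ++ procList lam (i-1)).map fac).prod)
        (bv (oneS n k hkn.le))) →
      ∀ c, c ≤ lam i →
      InvP n k (Shape lam i c) r ((((rowListB i c ++ procList lam (i-1)).map fac).prod)
        (bv (oneS n k hkn.le))) := by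
    intro i h1 h2 hbase c
    induction c with
    | zero => intro _; exact hbase
    | succ c ih =>
      intro hc
      have hprevInv := ih (by omega)
      have hlist : ((rowListB i (c+1) ++ procList lam (i-1)).map fac).prod
          = fac (i, c+1) * ((rowListB i c ++ procList lam (i-1)).map fac).prod := by
        rw [rowListB_succ, List.cons_append, List.map_cons, List.prod_cons]
      rw [hlist]
      have happ2 : (fac (i, c+1) * ((rowListB i c ++ procList lam (i-1)).map fac).prod)
            (bv (oneS n k hkn.le))
          = (fac (i, c+1)) (((rowListB i c ++ procList lam (i-1)).map fac).prod
            (bv (oneS n k hkn.le))) := rfl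
      rw [happ2, hstep_apply]
      have hposc := hpos i (c+1) h1 (by omega) hc
      refine step_lemma hk hkn r h1 h2 (by omega)
        (ShapeOK_shape hkn lam hY h1 h2 (by omega))
        (ShapeOK_shape hkn lam hY h1 h2 hc)
        ?_ ?_ ?_ ?_ ?_ ?_ ?_ hprevInv
      · show Shape lam i c i = (c+1) - 1
        unfold Shape
        rw [if_neg (by omega), if_pos rfl]
        omega
      · show Shape lam i (c+1) i = c+1
        unfold Shape
        rw [if_neg (by omega), if_pos rfl]
      · intro i' hi'
        unfold Shape
        by_cases hlt : i' < i
        · rw [if_pos hlt, if_pos hlt]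
        · rw [if_neg hlt, if_neg hlt, if_neg hi', if_neg hi']
      · intro hio
        have : Shape lam i c (i-1) = lam (i-1) := by
          unfold Shape
          rw [if_pos (by omega)]
        rw [this]
        have h := hY.1 (i-1) (by omega)
        rw [show i - 1 + 1 = i by omega] at h
        omega
      · exact hposc.1
      · intro hjo
        have h := hpos i c h1 (by omega) (by omega)
        rw [show c + 1 - 1 = c by omega]
        exact h.2.1
      · intro hio
        have h := hpos (i-1) (c+1) (by omega) (by omega)
          (by have := hmono (i-1) i (by omega) (by omega); omega)
        rw [show i - 1 + 1 = i by omega] at h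
        exact h.2.2
  -- main induction over rows
  have main : ∀ i, 1 ≤ i → i ≤ k →
      InvP n k (Shape lam i (lam i)) r ((((rowListB i (lam i) ++ procList lam (i-1)).map fac).prod)
        (bv (oneS n k hkn.le))) := by
    intro i
    induction i with
    | zero => intro h1 _; exact absurd h1 (by omega)
    | succ j ih =>
      intro h1 h2
      by_cases hj : j = 0
      · subst hj
        apply rowstep 1 (by omega) (by omega) _ (lam 1) (le_refl _)
        have hY10 : (((rowListB 1 0 ++ procList lam (1-1)).map fac).prod) (bv (oneS n k hkn.le))
            = bv (oneS n k hkn.le) := rfl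
        rw [hY10]
        exact InvP_base hk hkn lam hY r
      · have hj1 : 1 ≤ j := by omega
        have hprev := ih hj1 (by omega)
        apply rowstep (j+1) (by omega) h2 _ (lam (j+1)) (le_refl _)
        have hYeq : (((rowListB (j+1) 0 ++ procList lam ((j+1)-1)).map fac).prod)
              (bv (oneS n k hkn.le))
            = (((rowListB j (lam j) ++ procList lam (j-1)).map fac).prod) (bv (oneS n k hkn.le)) := by
          have h0 : rowListB (j+1) 0 = [] := rfl
          have hpl : (j+1) - 1 = j := by omega
          rw [h0, hpl, List.nil_append, procList_pos lam hj1]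
        rw [hYeq]
        apply InvP_congr_mu r _ hprev
        intro i' hi'
        unfold Shape
        by_cases hlt : i' < j
        · rw [if_pos hlt, if_pos (by omega : i' < j + 1)]
        · by_cases heq : i' = j
          · rw [if_neg hlt, if_pos heq, if_pos (by omega : i' < j + 1), heq]
          · rw [if_neg hlt, if_neg heq, if_neg (by omega : ¬ i' < j + 1)]
            split_ifs <;> rfl
  have hfinal := main k hk (le_refl k)
  have hXop : Xop n k lam r (bv (oneS n k hkn.le))
      = (((rowListB k (lam k) ++ procList lam (k-1)).map fac).prod) (bv (oneS n k hkn.le)) := by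
    have hXeq : Xop n k lam r = ((boxList k lam).map fac).prod := rfl
    rw [hXeq, boxList_eq_proc lam k, procList_pos lam hk]
  have hInv : InvP n k lam r (Xop n k lam r (bv (oneS n k hkn.le))) := by
    rw [hXop]
    apply InvP_congr_mu r _ hfinal
    intro i' hi'
    unfold Shape
    by_cases hlt : i' < k
    · rw [if_pos hlt]
    · by_cases heq : i' = k
      · rw [if_neg hlt, if_pos heq, heq]
      · rw [if_neg hlt, if_neg heq]
        exact (hY.2.2 i' (by omega)).symm
  exact fun ε => (hInv ε).1

end
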